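/- arXiv:2411.09275 — 4 statements merged into one kernel-verified Lean document; each statement's English description precedes it below -/
import Mathlib

section
/- The function f defined for real t > 2 by f(t) = t/(1 − log₂((t+2)/t)) − t is strictly decreasing on the interval (2, ∞). -/
/-- Key elementary inequality: for `0 < x < 1`,
`(log 2 - log (1+x)) * log (1+x) < x * log 2 / (1+x)`. -/
lemma stmt7_key (x : ℝ) (hx0 : 0 < x) (hx1 : x < 1) :
    (Real.log 2 - Real.log (1 + x)) * Real.log (1 + x)
      < x * Real.log 2 / (1 + x) := by
  have h1x : (0:ℝ) < 1 + x := by linarith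
  have hlog2 : (0.6931471803 : ℝ) < Real.log 2 := Real.log_two_gt_d9
  have hlog2lt : Real.log 2 < 1 := by
    have := Real.log_lt_sub_one_of_pos (by norm_num : (0:ℝ) < 2) (by norm_num)
    linarith
  have hLx : Real.log (1 + x) ≤ x := by
    have := Real.log_le_sub_one_of_pos h1x
    linarith
  have hLnn : 0 ≤ Real.log (1 + x) := Real.log_nonneg (by linarith)
  have hlow : x / (1 + x) ≤ Real.log (1 + x) := by
    have h := Real.log_le_sub_one_of_pos (show (0:ℝ) < 1 / (1 + x) by positivity)
    have hinv : Real.log (1 / (1 + x)) = - Real.log (1 + x) := by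
      rw [one_div, Real.log_inv]
    rw [hinv] at h
    have : (1 : ℝ) / (1 + x) - 1 = - (x / (1 + x)) := by
      field_simp
      ring
    linarith [this ▸ h]
  have hfrac : x / (1 + x) < 1 / 2 := by
    rw [div_lt_div_iff₀ h1x (by norm_num)]
    linarith
  have hnn : 0 ≤ Real.log 2 - x / (1 + x) := by linarith
  have step1 : (Real.log 2 - Real.log (1 + x)) * Real.log (1 + x)
      ≤ (Real.log 2 - x / (1 + x)) * x := by
    apply mul_le_mul (by linarith) hLx hLnn hnn
  have step2 : (Real.log 2 - x / (1 + x)) * x < x * Real.log 2 / (1 + x) := by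
    rw [lt_div_iff₀ h1x]
    have hq2 : x / (1 + x) * x * (1 + x) = x * x := by
      field_simp
    nlinarith [hq2, mul_pos hx0 hx0]
  linarith

theorem stmt_7 :
    StrictAntiOn (fun t : ℝ => t / (1 - Real.logb 2 ((t + 2) / t)) - t)
      (Set.Ioi (2 : ℝ)) := by
  set f : ℝ → ℝ := fun t : ℝ => t / (1 - Real.logb 2 ((t + 2) / t)) - t with hf
  have hmain : ∀ t : ℝ, 2 < t → ∃ d, HasDerivAt f d t ∧ d < 0 := by
    intro t ht
    have ht0 : (0:ℝ) < t := by linarith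
    have ht2 : (0:ℝ) < t + 2 := by linarith
    have hlog2 : (0.6931471803 : ℝ) < Real.log 2 := Real.log_two_gt_d9
    have hlog2pos : (0:ℝ) < Real.log 2 := by linarith
    set L : ℝ := Real.log ((t + 2) / t) with hL
    -- derivative of (t+2)/t
    have hu : HasDerivAt (fun y : ℝ => (y + 2) / y)
        ((1 * t - (t + 2) * 1) / t ^ 2) t :=
      ((hasDerivAt_id t).add_const 2).div (hasDerivAt_id t) (ne_of_gt ht0)
    have hune : (t + 2) / t ≠ 0 := by positivity
    have hlog := hu.log hune
    have hlogval : (1 * t - (t + 2) * 1) / t ^ 2 / ((t + 2) / t)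
        = -(2 / (t * (t + 2))) := by
      field_simp
      ring
    rw [hlogval] at hlog
    have hlogb : HasDerivAt (fun y : ℝ => Real.logb 2 ((y + 2) / y))
        (-(2 / (t * (t + 2))) / Real.log 2) t := by
      simpa [Real.logb] using hlog.div_const (Real.log 2)
    set G : ℝ := 1 - Real.logb 2 ((t + 2) / t) with hG
    have hGval : G = 1 - L / Real.log 2 := by
      rw [hG, hL, Real.logb]
    -- bounds on L
    have hu1 : (1:ℝ) < (t + 2) / t := by
      rw [lt_div_iff₀ ht0]; linarith
    have hu2 : (t + 2) / t < 2 := by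
      rw [div_lt_iff₀ ht0]; linarith
    have hLpos : 0 < L := Real.log_pos hu1
    have hLlt : L < Real.log 2 := Real.log_lt_log (by linarith) hu2
    have hGpos : 0 < G := by
      rw [hGval]
      have : L / Real.log 2 < 1 := (div_lt_one hlog2pos).mpr hLlt
      linarith
    have hGlt : G < 1 := by
      rw [hGval]
      have : 0 < L / Real.log 2 := div_pos hLpos hlog2pos
      linarith
    have hGne : G ≠ 0 := ne_of_gt hGpos
    have hg : HasDerivAt (fun y : ℝ => 1 - Real.logb 2 ((y + 2) / y))
        (0 - -(2 / (t * (t + 2))) / Real.log 2) t :=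
      (hasDerivAt_const t 1).sub hlogb
    have hfd : HasDerivAt f
        ((1 * G - t * (0 - -(2 / (t * (t + 2))) / Real.log 2)) / G ^ 2 - 1) t :=
      HasDerivAt.sub ((hasDerivAt_id t).div hg hGne) (hasDerivAt_id t)
    refine ⟨_, hfd, ?_⟩
    -- show the derivative is negative
    have hval : t * (0 - -(2 / (t * (t + 2))) / Real.log 2)
        = 2 / ((t + 2) * Real.log 2) := by
      field_simp
      ring
    rw [hval]
    have hkey := stmt7_key (2 / t) (by positivity)
      ((div_lt_one ht0).mpr (by linarith))
    have hx1 : (1 : ℝ) + 2 / t = (t + 2) / t := by field_simp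
    rw [hx1, ← hL] at hkey
    have hx2 : 2 / t * Real.log 2 / ((t + 2) / t) = 2 * Real.log 2 / (t + 2) := by
      field_simp
    rw [hx2] at hkey
    -- hkey : (log 2 - L) * L < 2 * log 2 / (t + 2)
    -- need : (1 * G - 2/((t+2) * log 2)) / G^2 - 1 < 0
    have hGG : G * (1 - G) < 2 / ((t + 2) * Real.log 2) := by
      have hGeq : G * (1 - G) = (Real.log 2 - L) * L / (Real.log 2 * Real.log 2) := by
        rw [hGval]
        field_simp
        ring
      rw [hGeq]
      rw [div_lt_div_iff₀ (by positivity) (by positivity)]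
      calc (Real.log 2 - L) * L * ((t + 2) * Real.log 2)
          = ((Real.log 2 - L) * L * (t + 2)) * Real.log 2 := by ring
        _ < (2 * Real.log 2 / (t + 2) * (t + 2)) * Real.log 2 := by
            apply mul_lt_mul_of_pos_right _ hlog2pos
            apply mul_lt_mul_of_pos_right hkey ht2
        _ = 2 * (Real.log 2 * Real.log 2) := by
            field_simp
    have hnum : 1 * G - 2 / ((t + 2) * Real.log 2) < G ^ 2 := by
      nlinarith [hGG]
    have : (1 * G - 2 / ((t + 2) * Real.log 2)) / G ^ 2 < 1 := by
      rw [div_lt_one (by positivity)]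
      exact hnum
    linarith
  apply strictAntiOn_of_deriv_neg (convex_Ioi (2:ℝ))
  · intro t ht
    obtain ⟨d, hd, _⟩ := hmain t ht
    exact hd.differentiableAt.continuousAt.continuousWithinAt
  · intro t ht
    rw [interior_Ioi] at ht
    obtain ⟨d, hd, hneg⟩ := hmain t ht
    rw [hd.deriv]
    exact hneg
end

section
/- Let d ≥ 0 and m be natural numbers with 1 ≤ m ≤ 2^d. Then the sum over i = 0, …, d of min(2^i, m) is at most 2m + m·(d − log₂ m). -/
lemma aux_chord {r : ℝ} (hr1 : 1 ≤ r) (hr2 : r ≤ 2) :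
    r * Real.log r ≤ 2 * (r - 1) * Real.log 2 := by
  have h := Real.convexOn_mul_log.2 (Set.mem_Ici.2 (by norm_num : (0:ℝ) ≤ 1))
    (Set.mem_Ici.2 (by norm_num : (0:ℝ) ≤ 2))
    (by linarith : (0:ℝ) ≤ 2 - r) (by linarith : (0:ℝ) ≤ r - 1) (by ring)
  simp only [smul_eq_mul] at h
  have h1 : (2 - r) * 1 + (r - 1) * 2 = r := by ring
  rw [h1] at h
  simp [Real.log_one] at h
  nlinarith [h]

theorem stmt_11 (d m : ℕ) (hm1 : 1 ≤ m) (hm2 : m ≤ 2 ^ d) :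
    ((∑ i ∈ Finset.range (d + 1), min (2 ^ i) m : ℕ) : ℝ) ≤
      2 * m + m * (d - Real.logb 2 m) := by
  set k := Nat.log 2 m with hk
  have hk2 : 2 ^ k ≤ m := Nat.pow_log_le_self 2 (by omega)
  have hk3 : m < 2 ^ (k + 1) := Nat.lt_pow_succ_log_self one_lt_two m
  have hkd : k ≤ d := by
    have := Nat.log_mono_right (b := 2) hm2
    rwa [Nat.log_pow one_lt_two] at this
  -- sum computation
  have hpow : ∀ n : ℕ, ∑ i ∈ Finset.range n, 2 ^ i = 2 ^ n - 1 := by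
    intro n
    induction n with
    | zero => simp
    | succ n ih =>
      rw [Finset.sum_range_succ, ih, pow_succ]
      have : 1 ≤ 2 ^ n := Nat.one_le_two_pow
      omega
  have hsum : (∑ i ∈ Finset.range (d + 1), min (2 ^ i) m) =
      (2 ^ (k + 1) - 1) + (d - k) * m := by
    rw [Finset.range_eq_Ico,
      ← Finset.sum_Ico_consecutive _ (Nat.zero_le (k + 1)) (by omega : k + 1 ≤ d + 1)]
    have h1 : ∑ i ∈ Finset.Ico 0 (k + 1), min (2 ^ i) m = 2 ^ (k + 1) - 1 := by
      rw [← Finset.range_eq_Ico, ← hpow (k + 1)]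
      apply Finset.sum_congr rfl
      intro i hi
      have : 2 ^ i ≤ 2 ^ k := Nat.pow_le_pow_right (by norm_num)
        (by simpa using Nat.lt_succ_iff.mp (Finset.mem_range.mp hi))
      exact min_eq_left (this.trans hk2)
    have h2 : ∑ i ∈ Finset.Ico (k + 1) (d + 1), min (2 ^ i) m = (d - k) * m := by
      have hcg : ∀ i ∈ Finset.Ico (k + 1) (d + 1), min (2 ^ i) m = m := by
        intro i hi
        have hi' := Finset.mem_Ico.mp hi
        have : 2 ^ (k + 1) ≤ 2 ^ i := Nat.pow_le_pow_right (by norm_num) hi'.1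
        exact min_eq_right (le_of_lt (lt_of_lt_of_le hk3 this))
      rw [Finset.sum_congr rfl hcg, Finset.sum_const, Nat.card_Ico, smul_eq_mul]
      congr 1
      omega
    rw [h1, h2]
  rw [hsum]
  have h1le : (1:ℕ) ≤ 2 ^ (k + 1) := Nat.one_le_two_pow
  push_cast [Nat.cast_sub h1le, Nat.cast_sub hkd]
  -- key real inequality
  have h2k : (0:ℝ) < 2 ^ k := by positivity
  set r : ℝ := (m : ℝ) / 2 ^ k with hr
  have hr1 : 1 ≤ r := (one_le_div h2k).2 (by exact_mod_cast hk2)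
  have hr2 : r ≤ 2 := by
    rw [hr, div_le_iff₀ h2k]
    have : (m : ℝ) < 2 ^ (k + 1) := by exact_mod_cast hk3
    rw [pow_succ] at this
    linarith
  have hmr : (m : ℝ) = 2 ^ k * r := by
    rw [hr]
    field_simp
  have hlog2 : 0 < Real.log 2 := Real.log_pos one_lt_two
  have hlogb : Real.logb 2 m = k + Real.logb 2 r := by
    rw [hmr, Real.logb_mul (by positivity) (by linarith), Real.logb_pow]
    simp [Real.logb_self_eq_one]
  have hchord := aux_chord hr1 hr2
  have hlbr : r * Real.logb 2 r ≤ 2 * r - 2 := by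
    rw [Real.logb, ← mul_div_assoc, div_le_iff₀ hlog2]
    nlinarith
  have hkey : (2:ℝ) ^ (k + 1) ≤ (m : ℝ) * (2 + k - Real.logb 2 m) := by
    rw [hlogb, hmr, pow_succ]
    have : (2:ℝ) ≤ r * (2 - Real.logb 2 r) := by nlinarith
    calc (2:ℝ)^k * 2 ≤ 2 ^ k * (r * (2 - Real.logb 2 r)) := by
          exact mul_le_mul_of_nonneg_left this (le_of_lt h2k)
      _ = 2 ^ k * r * (2 + k - (k + Real.logb 2 r)) := by ring
  have hm0 : (0:ℝ) ≤ (m:ℝ) := by positivity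
  nlinarith [hkey]
end

section
/- Let 0 < α < 1/2 and let n ≥ 1 be a natural number. Suppose x is a natural number with (1/2 − α/4)·n ≤ x ≤ (1/2 + α/4)·n (the left-subtree size just after rebuilding a subtree of size n). Suppose after u insertions the subtree has size n + u and left-subtree size x + v for some natural numbers u, v with 0 ≤ v ≤ u, and suppose the weight-balance condition is violated, i.e., x + v > (1/2 + α)·(n + u) or x + v < (1/2 − α)·(n + u). Then u > (3α/4)·n / (1/2 − α); in particular u > (3α/2)·n. -/
theorem stmt_12 (α : ℝ) (hα0 : 0 < α) (hα : α < 1 / 2)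
    (n : ℕ) (hn : 1 ≤ n) (x u v : ℕ)
    (hx1 : (1 / 2 - α / 4) * n ≤ (x : ℝ)) (hx2 : (x : ℝ) ≤ (1 / 2 + α / 4) * n)
    (hvu : v ≤ u)
    (hviol : ((x : ℝ) + v > (1 / 2 + α) * ((n : ℝ) + u)) ∨
             ((x : ℝ) + v < (1 / 2 - α) * ((n : ℝ) + u))) :
    (u : ℝ) > (3 * α / 4) * n / (1 / 2 - α) ∧ (u : ℝ) > (3 * α / 2) * n := by
  have hpos : (0 : ℝ) < 1 / 2 - α := by linarith
  have hn' : (1 : ℝ) ≤ (n : ℝ) := by exact_mod_cast hn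
  have hv0 : (0 : ℝ) ≤ (v : ℝ) := Nat.cast_nonneg v
  have hvu' : (v : ℝ) ≤ (u : ℝ) := by exact_mod_cast hvu
  have key : (1 / 2 - α) * u > (3 * α / 4) * n := by
    rcases hviol with h | h
    · nlinarith
    · nlinarith
  have h1 : (u : ℝ) > (3 * α / 4) * n / (1 / 2 - α) := by
    rw [gt_iff_lt, div_lt_iff₀ hpos]
    linarith [mul_comm ((1:ℝ)/2 - α) (u : ℝ)]
  refine ⟨h1, ?_⟩
  have : (3 * α / 4) * n / (1 / 2 - α) ≥ (3 * α / 2) * n := by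
    rw [ge_iff_le, le_div_iff₀ hpos]
    nlinarith
  linarith
end

section
/- Let r, c ≥ 1 and let A : Fin r × Fin c → ℕ be a matrix of counts. Define B : Fin r × Fin c → ℕ as the exclusive prefix sum of A in column-major order, i.e., B(i, j) = Σ_{j' < j} Σ_{i'} A(i', j') + Σ_{i' < i} A(i', j). Then the half-open intervals [B(i, j), B(i, j) + A(i, j)) for (i, j) ranging over Fin r × Fin c are pairwise disjoint, and their union equals [0, Σ_{i, j} A(i, j)). -/
private lemma blk {n : ℕ} (f : Fin n → ℕ) (i : Fin n) (s : Finset (Fin n))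
    (hi : i ∈ s) (hsub : ∀ k, k < i → k ∈ s) :
    (∑ k ∈ Finset.univ.filter (fun k => k < i), f k) + f i ≤ ∑ k ∈ s, f k := by
  have hins : insert i (Finset.univ.filter (fun k => k < i)) ⊆ s := by
    intro k hk
    rcases Finset.mem_insert.mp hk with rfl | hk
    · exact hi
    · exact hsub k (by simpa using hk)
  calc (∑ k ∈ Finset.univ.filter (fun k => k < i), f k) + f i
      = ∑ k ∈ insert i (Finset.univ.filter (fun k => k < i)), f k := by
        rw [Finset.sum_insert (by simp), add_comm]
    _ ≤ ∑ k ∈ s, f k := Finset.sum_le_sum_of_subset hins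

theorem stmt_13 (r c : ℕ) (hr : 1 ≤ r) (hc : 1 ≤ c)
    (A B : Fin r × Fin c → ℕ)
    (hB : ∀ p : Fin r × Fin c,
      B p = (∑ j' ∈ Finset.univ.filter (fun j' : Fin c => j' < p.2), ∑ i' : Fin r, A (i', j'))
            + ∑ i' ∈ Finset.univ.filter (fun i' : Fin r => i' < p.1), A (i', p.2)) :
    (Set.univ : Set (Fin r × Fin c)).PairwiseDisjoint
        (fun p => Finset.Ico (B p) (B p + A p)) ∧
      Finset.univ.biUnion (fun p : Fin r × Fin c => Finset.Ico (B p) (B p + A p)) =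
        Finset.range (∑ p : Fin r × Fin c, A p) := by
  set g : Fin c → ℕ := fun j => ∑ i' : Fin r, A (i', j) with hg
  -- key ordering lemma
  have key : ∀ p q : Fin r × Fin c,
      (p.2 < q.2 ∨ (p.2 = q.2 ∧ p.1 < q.1)) → B p + A p ≤ B q := by
    rintro ⟨pi, pj⟩ ⟨qi, qj⟩ (h | ⟨rfl, h⟩)
    · have h1 : B (pi, pj) + A (pi, pj)
          ≤ (∑ j' ∈ Finset.univ.filter (fun j' : Fin c => j' < pj), g j') + g pj := by
        rw [hB (pi, pj), add_assoc]
        exact Nat.add_le_add_left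
          (blk (fun i' => A (i', pj)) pi Finset.univ (Finset.mem_univ _)
            (fun _ _ => Finset.mem_univ _)) _
      have h2 : (∑ j' ∈ Finset.univ.filter (fun j' : Fin c => j' < pj), g j') + g pj
          ≤ ∑ j' ∈ Finset.univ.filter (fun j' : Fin c => j' < qj), g j' :=
        blk g pj _ (by simpa using h) (fun k hk => by
          simp only [Finset.mem_filter, Finset.mem_univ, true_and]; exact hk.trans h)
      have h3 : (∑ j' ∈ Finset.univ.filter (fun j' : Fin c => j' < qj), g j') ≤ B (qi, qj) := by
        rw [hB (qi, qj)]; exact Nat.le_add_right _ _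
      exact (h1.trans h2).trans h3
    · rw [hB (pi, pj), hB (qi, pj), add_assoc]
      refine Nat.add_le_add_left ?_ _
      exact blk (fun i' => A (i', pj)) pi _ (by simpa using h) (fun k hk => by
        simp only [Finset.mem_filter, Finset.mem_univ, true_and]; exact hk.trans h)
  have hdisj : ∀ p q : Fin r × Fin c, p ≠ q →
      Disjoint (Finset.Ico (B p) (B p + A p)) (Finset.Ico (B q) (B q + A q)) := by
    intro p q hpq
    have hcase : (p.2 < q.2 ∨ (p.2 = q.2 ∧ p.1 < q.1)) ∨
        (q.2 < p.2 ∨ (q.2 = p.2 ∧ q.1 < p.1)) := by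
      rcases lt_trichotomy p.2 q.2 with h | h | h
      · exact Or.inl (Or.inl h)
      · rcases lt_trichotomy p.1 q.1 with h1 | h1 | h1
        · exact Or.inl (Or.inr ⟨h, h1⟩)
        · exact absurd (Prod.ext h1 h) hpq
        · exact Or.inr (Or.inr ⟨h.symm, h1⟩)
      · exact Or.inr (Or.inl h)
    rcases hcase with h | h
    · have := key p q h
      rw [Finset.disjoint_left]
      intro x hx hx'
      simp only [Finset.mem_Ico] at hx hx'
      omega
    · have := key q p h
      rw [Finset.disjoint_left]
      intro x hx hx'
      simp only [Finset.mem_Ico] at hx hx'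
      omega
  constructor
  · intro p _ q _ hpq
    exact hdisj p q hpq
  · -- total sum rewriting
    have htot : (∑ p : Fin r × Fin c, A p) = ∑ j : Fin c, g j := by
      rw [hg]
      rw [Fintype.sum_prod_type_right (f := fun p : Fin r × Fin c => A p)]
    have hub : ∀ p : Fin r × Fin c, B p + A p ≤ ∑ p : Fin r × Fin c, A p := by
      rintro ⟨pi, pj⟩
      have h1 : B (pi, pj) + A (pi, pj)
          ≤ (∑ j' ∈ Finset.univ.filter (fun j' : Fin c => j' < pj), g j') + g pj := by
        rw [hB (pi, pj), add_assoc]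
        exact Nat.add_le_add_left
          (blk (fun i' => A (i', pj)) pi Finset.univ (Finset.mem_univ _)
            (fun _ _ => Finset.mem_univ _)) _
      have h2 : (∑ j' ∈ Finset.univ.filter (fun j' : Fin c => j' < pj), g j') + g pj
          ≤ ∑ j' : Fin c, g j' :=
        blk g pj Finset.univ (Finset.mem_univ _) (fun _ _ => Finset.mem_univ _)
      rw [htot]
      exact h1.trans h2
    have hsub : Finset.univ.biUnion (fun p : Fin r × Fin c => Finset.Ico (B p) (B p + A p))
        ⊆ Finset.range (∑ p : Fin r × Fin c, A p) := by
      intro x hx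
      rcases Finset.mem_biUnion.mp hx with ⟨p, _, hp⟩
      rw [Finset.mem_Ico] at hp
      exact Finset.mem_range.mpr (lt_of_lt_of_le hp.2 (hub p))
    have hcard : (Finset.univ.biUnion
        (fun p : Fin r × Fin c => Finset.Ico (B p) (B p + A p))).card
        = ∑ p : Fin r × Fin c, A p := by
      rw [Finset.card_biUnion (fun p _ q _ h => hdisj p q h)]
      simp [Nat.card_Ico]
    refine Finset.eq_of_subset_of_card_le hsub ?_
    rw [hcard, Finset.card_range]
end
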